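/- arXiv:2208.01458 — 2 statements merged into one kernel-verified Lean document; each statement's English description precedes it below -/
import Mathlib

section
/- Let f : ℝ² → ℝ be C¹ on the closed exterior half-region Ω₀ = {(r,θ) : r > r₀, 0 < θ < π} (in polar coordinates, r₀ > 0) with finite Dirichlet integral ∫_{Ω₀} |∇f|² dx dy < ∞. Then (1/log r) ∫₀^π f(r,θ)² dθ → 0 as r → ∞. -/
open MeasureTheory Real Filter Set intervalIntegral

/-- Weighted Cauchy–Schwarz on an interval. -/
lemma cs_weighted {a b : ℝ} (ha : 0 < a) (hab : a ≤ b) {u : ℝ → ℝ}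
    (hu : ContinuousOn u (Icc a b)) :
    (∫ t in a..b, u t) ^ 2 ≤ (Real.log (b / a)) * ∫ t in a..b, (u t) ^ 2 * t := by
  have huIcc : uIcc a b = Icc a b := uIcc_of_le hab
  have hpos : ∀ t ∈ Icc a b, 0 < t := fun t ht => lt_of_lt_of_le ha ht.1
  have hti : ContinuousOn (fun t : ℝ => t) (Icc a b) := continuousOn_id
  have c1 : IntervalIntegrable u volume a b := by
    rw [intervalIntegrable_iff_integrableOn_Icc_of_le hab]
    exact hu.integrableOn_Icc
  have hu2 : ContinuousOn (fun t => (u t) ^ 2 * t) (Icc a b) := ((hu.pow 2).mul hti)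
  have c2 : IntervalIntegrable (fun t => (u t) ^ 2 * t) volume a b := by
    rw [intervalIntegrable_iff_integrableOn_Icc_of_le hab]
    exact hu2.integrableOn_Icc
  have hinv : ContinuousOn (fun t : ℝ => 1 / t) (Icc a b) :=
    continuousOn_const.div hti (fun t ht => (hpos t ht).ne')
  have c3 : IntervalIntegrable (fun t : ℝ => 1 / t) volume a b := by
    rw [intervalIntegrable_iff_integrableOn_Icc_of_le hab]
    exact hinv.integrableOn_Icc
  set A : ℝ := ∫ t in a..b, (u t) ^ 2 * t with hA
  set B : ℝ := ∫ t in a..b, (1 : ℝ) / t with hB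
  set C : ℝ := ∫ t in a..b, u t with hC
  have hBlog : B = Real.log (b / a) := by
    rw [hB]
    exact integral_one_div (by rw [huIcc]; intro h; exact (hpos 0 h).false)
  have key : ∀ x : ℝ, 0 ≤ A * (x * x) + (-2 * C) * x + B := by
    intro x
    have hnn : 0 ≤ ∫ t in a..b, (x * (u t * t) - 1) ^ 2 / t := by
      apply intervalIntegral.integral_nonneg hab
      intro t ht
      exact div_nonneg (sq_nonneg _) (hpos t ht).le
    have hexp : (∫ t in a..b, (x * (u t * t) - 1) ^ 2 / t)
        = A * (x * x) + (-2 * C) * x + B := by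
      have heq : ∀ t ∈ Icc a b,
          (x * (u t * t) - 1) ^ 2 / t
            = (x * x) * ((u t) ^ 2 * t) + (-2 * x) * u t + 1 / t := by
        intro t ht
        have h0 : t ≠ 0 := (hpos t ht).ne'
        field_simp
        ring
      rw [intervalIntegral.integral_congr (g := fun t =>
          (x * x) * ((u t) ^ 2 * t) + (-2 * x) * u t + 1 / t)
          (by rw [huIcc]; exact fun t ht => heq t ht)]
      rw [intervalIntegral.integral_add ((c2.const_mul _).add (c1.const_mul _)) c3,
        intervalIntegral.integral_add (c2.const_mul _) (c1.const_mul _),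
        intervalIntegral.integral_const_mul, intervalIntegral.integral_const_mul]
      ring
    linarith [hexp ▸ hnn]
  have hd := discrim_le_zero key
  rw [discrim] at hd
  have : C ^ 2 ≤ A * B := by nlinarith
  calc C ^ 2 ≤ A * B := this
    _ = Real.log (b / a) * A := by rw [hBlog]; ring

lemma ftc_bound {r₀ r₁ r θ : ℝ} (hr₀ : 0 < r₀) (h01 : r₀ < r₁) (h1r : r₁ ≤ r)
    (hθ : θ ∈ Ioo 0 π) {f : ℝ × ℝ → ℝ}
    (hf : ContDiffOn ℝ 1 f (Ioi r₀ ×ˢ Ioo 0 π)) :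
    f (r, θ) ^ 2 ≤ 2 * f (r₁, θ) ^ 2
      + 2 * Real.log (r / r₁) * ∫ t in Ioc r₁ r, (fderiv ℝ f (t, θ) (1, 0)) ^ 2 * t := by
  have hUopen : IsOpen (Ioi r₀ ×ˢ Ioo 0 π) := isOpen_Ioi.prod isOpen_Ioo
  set g : ℝ → ℝ := fun t => fderiv ℝ f (t, θ) (1, 0) with hg
  have hmem : ∀ t ∈ Icc r₁ r, (t, θ) ∈ Ioi r₀ ×ˢ Ioo 0 π :=
    fun t ht => ⟨lt_of_lt_of_le h01 ht.1, hθ⟩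
  have hder : ∀ t ∈ Icc r₁ r, HasDerivAt (fun s => f (s, θ)) (g t) t := by
    intro t ht
    have hd : DifferentiableAt ℝ f (t, θ) :=
      (hf.contDiffAt (hUopen.mem_nhds (hmem t ht))).differentiableAt one_ne_zero
    have hcurve : HasDerivAt (fun s : ℝ => (s, θ)) ((1 : ℝ), (0 : ℝ)) t :=
      HasDerivAt.prodMk (hasDerivAt_id t) (hasDerivAt_const t θ)
    exact hd.hasFDerivAt.comp_hasDerivAt t hcurve
  have hgcont : ContinuousOn g (Icc r₁ r) := by
    have h1 : ContinuousOn (fderiv ℝ f) (Ioi r₀ ×ˢ Ioo 0 π) :=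
      hf.continuousOn_fderiv_of_isOpen hUopen le_rfl
    exact ((h1.comp (Continuous.continuousOn (continuous_id.prodMk continuous_const))
      hmem).clm_apply continuousOn_const)
  have hint : IntervalIntegrable g volume r₁ r := by
    rw [intervalIntegrable_iff_integrableOn_Icc_of_le h1r]
    exact hgcont.integrableOn_Icc
  have hftc : ∫ t in r₁..r, g t = f (r, θ) - f (r₁, θ) :=
    integral_eq_sub_of_hasDerivAt (by rw [uIcc_of_le h1r]; exact hder) hint
  have hcs := cs_weighted (lt_trans hr₀ h01) h1r hgcont
  have hIoc : (∫ t in r₁..r, (g t) ^ 2 * t) = ∫ t in Ioc r₁ r, (g t) ^ 2 * t :=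
    integral_of_le h1r
  rw [hIoc, hftc] at hcs
  show f (r, θ) ^ 2 ≤ 2 * f (r₁, θ) ^ 2
      + 2 * Real.log (r / r₁) * ∫ t in Ioc r₁ r, (g t) ^ 2 * t
  nlinarith [sq_nonneg (f (r, θ) - 2 * f (r₁, θ)), hcs]
/-- Gilbarg–Weinberger type lemma on the exterior half-region, in polar
coordinates: finite Dirichlet integral implies the angular square mean is
`o(log r)`. -/
theorem stmt_0 (r₀ : ℝ) (hr₀ : 0 < r₀) (f : ℝ × ℝ → ℝ)
    (hf : ContDiffOn ℝ 1 f (Ici r₀ ×ˢ Icc 0 π))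
    (hDir : IntegrableOn
      (fun q : ℝ × ℝ =>
        ((deriv (fun r => f (r, q.2)) q.1) ^ 2
          + (deriv (fun θ => f (q.1, θ)) q.2) ^ 2 / q.1 ^ 2) * q.1)
      (Ioi r₀ ×ˢ Ioo 0 π)) :
    Tendsto (fun r : ℝ => (1 / Real.log r) * ∫ θ in (0:ℝ)..π, (f (r, θ)) ^ 2)
      atTop (nhds 0) := by
  have hUmeas : MeasurableSet (Ioi r₀ ×ˢ Ioo 0 π) :=
    measurableSet_Ioi.prod measurableSet_Ioo
  have hUopen : IsOpen (Ioi r₀ ×ˢ Ioo 0 π) := isOpen_Ioi.prod isOpen_Ioo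
  have hfU : ContDiffOn ℝ 1 f (Ioi r₀ ×ˢ Ioo 0 π) :=
    hf.mono (prod_mono Ioi_subset_Ici_self Ioo_subset_Icc_self)
  set F : ℝ × ℝ → ℝ := fun p =>
    ((fderiv ℝ f p (1, 0)) ^ 2 + (fderiv ℝ f p (0, 1)) ^ 2 / p.1 ^ 2) * p.1 with hFdef
  have hdiffU : ∀ p ∈ Ioi r₀ ×ˢ Ioo 0 π, DifferentiableAt ℝ f p := fun p hp =>
    (hfU.contDiffAt (hUopen.mem_nhds hp)).differentiableAt one_ne_zero
  have hFeq : EqOn (fun q : ℝ × ℝ =>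
      ((deriv (fun r => f (r, q.2)) q.1) ^ 2
        + (deriv (fun θ => f (q.1, θ)) q.2) ^ 2 / q.1 ^ 2) * q.1) F (Ioi r₀ ×ˢ Ioo 0 π) := by
    intro p hp
    have hd := hdiffU p hp
    have h1 : HasDerivAt (fun s => f (s, p.2)) (fderiv ℝ f p (1, 0)) p.1 := by
      have hcurve : HasDerivAt (fun s : ℝ => (s, p.2)) ((1 : ℝ), (0 : ℝ)) p.1 :=
        HasDerivAt.prodMk (hasDerivAt_id _) (hasDerivAt_const _ _)
      exact hd.hasFDerivAt.comp_hasDerivAt p.1 hcurve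
    have h2 : HasDerivAt (fun θ => f (p.1, θ)) (fderiv ℝ f p (0, 1)) p.2 := by
      have hcurve : HasDerivAt (fun s : ℝ => (p.1, s)) ((0 : ℝ), (1 : ℝ)) p.2 :=
        HasDerivAt.prodMk (hasDerivAt_const _ _) (hasDerivAt_id _)
      exact hd.hasFDerivAt.comp_hasDerivAt p.2 hcurve
    simp only [h1.deriv, h2.deriv, hFdef]
  have hFint : IntegrableOn F (Ioi r₀ ×ˢ Ioo 0 π) := hDir.congr_fun hFeq hUmeas
  have hFmeas : Measurable F :=
    (((measurable_fderiv_apply_const ℝ f (1, 0)).pow_const 2).add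
      (((measurable_fderiv_apply_const ℝ f (0, 1)).pow_const 2).div
        (measurable_fst.pow_const 2))).mul measurable_fst
  have hFnonnegU : ∀ p ∈ Ioi r₀ ×ˢ Ioo 0 π, 0 ≤ F p := by
    intro p hp
    have hp1 : (0 : ℝ) < p.1 := lt_trans hr₀ hp.1
    exact mul_nonneg (add_nonneg (sq_nonneg _)
      (div_nonneg (sq_nonneg _) (sq_nonneg _))) hp1.le
  set k : ℝ × ℝ → ℝ := fun p => (fderiv ℝ f p (1, 0)) ^ 2 * p.1 with hkdef
  have hkmeas : Measurable k :=
    ((measurable_fderiv_apply_const ℝ f (1, 0)).pow_const 2).mul measurable_fst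
  have hk_le : ∀ p ∈ Ioi r₀ ×ˢ Ioo 0 π, ‖k p‖ ≤ F p := by
    intro p hp
    have hp1 : (0 : ℝ) < p.1 := lt_trans hr₀ hp.1
    rw [Real.norm_eq_abs, abs_of_nonneg (mul_nonneg (sq_nonneg _) hp1.le)]
    have h2 : 0 ≤ (fderiv ℝ f p (0, 1)) ^ 2 / p.1 ^ 2 :=
      div_nonneg (sq_nonneg _) (sq_nonneg _)
    rw [hFdef]
    nlinarith [hp1.le]
  have hkint : ∀ s : Set ℝ, s ⊆ Ioi r₀ → MeasurableSet s →
      IntegrableOn k (s ×ˢ Ioo 0 π) := by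
    intro s hs hsm
    have hsub : s ×ˢ Ioo 0 π ⊆ Ioi r₀ ×ˢ Ioo 0 π := prod_mono hs (subset_refl _)
    exact Integrable.mono' (hFint.mono_set hsub) hkmeas.aestronglyMeasurable
      ((ae_restrict_iff' (hsm.prod measurableSet_Ioo)).2
        (ae_of_all _ fun p hp => hk_le p (hsub hp)))
  have hfsq_int : ∀ s : ℝ, r₀ ≤ s → IntegrableOn (fun θ => f (s, θ) ^ 2) (Ioo 0 π) := by
    intro s hs
    have hcont : ContinuousOn (fun θ => f (s, θ) ^ 2) (Icc 0 π) := by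
      have hc : ContinuousOn f (Ici r₀ ×ˢ Icc 0 π) := hf.continuousOn
      exact (hc.comp (Continuous.continuousOn (continuous_const.prodMk continuous_id))
        (fun θ hθ => ⟨hs, hθ⟩)).pow 2
    exact hcont.integrableOn_Icc.mono_set Ioo_subset_Icc_self
  -- main estimate
  have main : ∀ r₁ r : ℝ, r₀ < r₁ → r₁ ≤ r →
      (∫ θ in Ioo 0 π, f (r, θ) ^ 2)
        ≤ 2 * (∫ θ in Ioo 0 π, f (r₁, θ) ^ 2)
          + 2 * Real.log (r / r₁) * ∫ p in Ioi r₁ ×ˢ Ioo 0 π, F p := by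
    intro r₁ r h01 h1r
    have hsubIoc : Ioc r₁ r ⊆ Ioi r₀ := fun t ht => lt_trans h01 ht.1
    have hsubIoi : Ioi r₁ ⊆ Ioi r₀ := Ioi_subset_Ioi h01.le
    set G : ℝ → ℝ := fun θ => ∫ t in Ioc r₁ r, k (t, θ) with hGdef
    have hprodmeas : (volume : Measure (ℝ × ℝ)).restrict (Ioc r₁ r ×ˢ Ioo 0 π)
        = (volume.restrict (Ioc r₁ r)).prod (volume.restrict (Ioo 0 π)) := by
      rw [Measure.prod_restrict, ← Measure.volume_eq_prod]
    have hk1 : IntegrableOn k (Ioc r₁ r ×ˢ Ioo 0 π) :=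
      hkint _ hsubIoc measurableSet_Ioc
    have hk1' : Integrable k
        ((volume.restrict (Ioc r₁ r)).prod (volume.restrict (Ioo 0 π))) := by
      rw [← hprodmeas]; exact hk1
    have hGint : IntegrableOn G (Ioo 0 π) := by
      have h := hk1'.swap.integral_prod_left
      simp [Function.comp, hGdef] at h; exact h
    have hswap : (∫ θ in Ioo 0 π, G θ) = ∫ p in Ioc r₁ r ×ˢ Ioo 0 π, k p := by
      rw [hprodmeas]
      exact (integral_prod_symm k hk1').symm
    have hpt : ∀ θ ∈ Ioo 0 π,
        f (r, θ) ^ 2 ≤ 2 * f (r₁, θ) ^ 2 + 2 * Real.log (r / r₁) * G θ := by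
      intro θ hθ
      have h := ftc_bound hr₀ h01 h1r hθ hfU
      simpa [hGdef, hkdef] using h
    have hRHSint : IntegrableOn
        (fun θ => 2 * f (r₁, θ) ^ 2 + 2 * Real.log (r / r₁) * G θ) (Ioo 0 π) :=
      ((hfsq_int r₁ h01.le).const_mul 2).add (hGint.const_mul _)
    have hGle : (∫ θ in Ioo 0 π, G θ) ≤ ∫ p in Ioi r₁ ×ˢ Ioo 0 π, F p := by
      rw [hswap]
      have hsub1 : Ioc r₁ r ×ˢ Ioo 0 π ⊆ Ioi r₀ ×ˢ Ioo 0 π :=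
        prod_mono hsubIoc (subset_refl _)
      have hsub2 : Ioi r₁ ×ˢ Ioo 0 π ⊆ Ioi r₀ ×ˢ Ioo 0 π :=
        prod_mono hsubIoi (subset_refl _)
      have hsub12 : Ioc r₁ r ×ˢ Ioo 0 π ⊆ Ioi r₁ ×ˢ Ioo 0 π :=
        prod_mono Ioc_subset_Ioi_self (subset_refl _)
      have step1 : (∫ p in Ioc r₁ r ×ˢ Ioo 0 π, k p)
          ≤ ∫ p in Ioc r₁ r ×ˢ Ioo 0 π, F p :=
        setIntegral_mono_on hk1 (hFint.mono_set hsub1)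
          (measurableSet_Ioc.prod measurableSet_Ioo)
          (fun p hp => le_trans (le_abs_self _)
            (by simpa [Real.norm_eq_abs] using hk_le p (hsub1 hp)))
      have step2 : (∫ p in Ioc r₁ r ×ˢ Ioo 0 π, F p)
          ≤ ∫ p in Ioi r₁ ×ˢ Ioo 0 π, F p :=
        setIntegral_mono_set (hFint.mono_set hsub2)
          ((ae_restrict_iff' (measurableSet_Ioi.prod measurableSet_Ioo)).2
            (ae_of_all _ fun p hp => hFnonnegU p (hsub2 hp)))
          (HasSubset.Subset.eventuallyLE hsub12)
      linarith
    have hlrr : 0 ≤ Real.log (r / r₁) :=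
      Real.log_nonneg ((one_le_div (lt_trans hr₀ h01)).2 h1r)
    calc (∫ θ in Ioo 0 π, f (r, θ) ^ 2)
        ≤ ∫ θ in Ioo 0 π, (2 * f (r₁, θ) ^ 2 + 2 * Real.log (r / r₁) * G θ) :=
          setIntegral_mono_on (hfsq_int r (le_trans h01.le h1r)) hRHSint
            measurableSet_Ioo hpt
      _ = 2 * (∫ θ in Ioo 0 π, f (r₁, θ) ^ 2)
            + 2 * Real.log (r / r₁) * ∫ θ in Ioo 0 π, G θ := by
          rw [integral_add ((hfsq_int r₁ h01.le).const_mul 2) (hGint.const_mul _),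
            MeasureTheory.integral_const_mul, MeasureTheory.integral_const_mul]
      _ ≤ 2 * (∫ θ in Ioo 0 π, f (r₁, θ) ^ 2)
            + 2 * Real.log (r / r₁) * ∫ p in Ioi r₁ ×ˢ Ioo 0 π, F p := by
          have := mul_le_mul_of_nonneg_left hGle (by linarith : (0:ℝ) ≤ 2 * Real.log (r / r₁))
          linarith
  -- tail of the Dirichlet integral tends to zero
  have htail : Tendsto (fun n : ℕ => ∫ p in Ioi (r₀ + 1 + (n : ℝ)) ×ˢ Ioo 0 π, F p)
      atTop (nhds 0) := by
    have hmeasn : ∀ n : ℕ, MeasurableSet (Ioi (r₀ + 1 + (n : ℝ)) ×ˢ Ioo 0 π) :=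
      fun n => measurableSet_Ioi.prod measurableSet_Ioo
    have key : Tendsto (fun n : ℕ =>
        ∫ p : ℝ × ℝ, (Ioi (r₀ + 1 + (n : ℝ)) ×ˢ Ioo 0 π).indicator F p)
        atTop (nhds (∫ _p : ℝ × ℝ, (0 : ℝ))) := by
      refine tendsto_integral_of_dominated_convergence
        ((Ioi r₀ ×ˢ Ioo 0 π).indicator fun p => |F p|)
        (fun n => (hFmeas.indicator (hmeasn n)).aestronglyMeasurable)
        (by rw [integrable_indicator_iff hUmeas]; exact hFint.abs)
        (fun n => ae_of_all _ fun p => ?_)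
        (ae_of_all _ fun p => ?_)
      · rw [norm_indicator_eq_indicator_norm]
        refine Set.indicator_le_indicator_of_subset
          (Set.prod_mono (Ioi_subset_Ioi (by have : (0:ℝ) ≤ (n:ℝ) := Nat.cast_nonneg n; linarith)) (subset_refl _))
          (fun q => abs_nonneg _) p
      · have hev : ∀ᶠ n : ℕ in atTop,
            (Ioi (r₀ + 1 + (n : ℝ)) ×ˢ Ioo 0 π).indicator F p = 0 := by
          filter_upwards [eventually_ge_atTop (⌈p.1⌉₊)] with n hn
          apply Set.indicator_of_notMem
          intro hp
          have h1 : p.1 ≤ (n : ℝ) := le_trans (Nat.le_ceil p.1) (Nat.cast_le.2 hn)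
          have h2 : r₀ + 1 + (n : ℝ) < p.1 := hp.1
          linarith
        exact Tendsto.congr' (hev.mono fun n h => h.symm) tendsto_const_nhds
    rw [MeasureTheory.integral_zero] at key
    exact key.congr fun n => integral_indicator (hmeasn n)
  -- conclusion
  rw [Metric.tendsto_atTop]
  intro ε hε
  obtain ⟨n, hn⟩ :=
    (htail.eventually (eventually_lt_nhds (show (0:ℝ) < ε / 4 by linarith))).exists
  set r₁ : ℝ := r₀ + 1 + (n : ℝ) with hr₁def
  have h01 : r₀ < r₁ := by
    have := Nat.cast_nonneg (α := ℝ) n; simp only [hr₁def]; linarith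
  have hr₁1 : (1 : ℝ) ≤ r₁ := by
    have := Nat.cast_nonneg (α := ℝ) n; simp only [hr₁def]; linarith
  set T : ℝ := ∫ p in Ioi r₁ ×ˢ Ioo 0 π, F p with hTdef
  have hT0 : 0 ≤ T :=
    setIntegral_nonneg (measurableSet_Ioi.prod measurableSet_Ioo)
      (fun p hp => hFnonnegU p (prod_mono (Ioi_subset_Ioi h01.le) (subset_refl _) hp))
  set A : ℝ := ∫ θ in Ioo 0 π, f (r₁, θ) ^ 2 with hAdef
  have hA0 : 0 ≤ A :=
    setIntegral_nonneg measurableSet_Ioo (fun _ _ => sq_nonneg _)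
  refine ⟨max r₁ (Real.exp (4 * A / ε + 1)), fun r hrN => ?_⟩
  have hr1 : r₁ ≤ r := le_trans (le_max_left _ _) hrN
  have hrpos : 0 < r := lt_of_lt_of_le (by linarith) hr1
  have hlog : 4 * A / ε + 1 ≤ Real.log r := by
    rw [Real.le_log_iff_exp_le hrpos]
    exact le_trans (le_max_right _ _) hrN
  have hlogpos : 0 < Real.log r :=
    lt_of_lt_of_le (by positivity) hlog
  have hφ0 : 0 ≤ ∫ θ in Ioo 0 π, f (r, θ) ^ 2 :=
    setIntegral_nonneg measurableSet_Ioo (fun _ _ => sq_nonneg _)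
  have hφ : (∫ θ in (0:ℝ)..π, f (r, θ) ^ 2) = ∫ θ in Ioo 0 π, f (r, θ) ^ 2 := by
    rw [intervalIntegral.integral_of_le Real.pi_pos.le, integral_Ioc_eq_integral_Ioo]
  have hmain := main r₁ r h01 hr1
  have hlrr : 0 ≤ Real.log (r / r₁) :=
    Real.log_nonneg ((one_le_div (by linarith)).2 hr1)
  have hloglog : Real.log (r / r₁) ≤ Real.log r := by
    rw [Real.log_div (by linarith) (by linarith)]
    linarith [Real.log_nonneg hr₁1]
  have hTle : Real.log (r / r₁) * T ≤ Real.log r * (ε / 4) :=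
    mul_le_mul hloglog hn.le hT0 hlogpos.le
  rw [← hTdef, ← hAdef] at hmain
  have hεlog : 4 * A + ε ≤ Real.log r * ε := by
    have h := mul_le_mul_of_nonneg_right hlog hε.le
    rw [add_mul, div_mul_cancel₀ _ hε.ne', one_mul] at h
    exact h
  rw [Real.dist_eq, sub_zero, hφ,
    abs_of_nonneg (mul_nonneg (by positivity) hφ0), one_div,
    inv_mul_lt_iff₀ hlogpos]
  linarith [hmain, hTle, hεlog, hA0]
end

section
/- Let p be C¹ on Ω₀ = {r > r₁, 0 < θ < π} (r₁ > max(r₀,1)) with ∫_{Ω₀} |∇p|²/log r dx dy < ∞. Then there exists a sequence Rₙ ∈ (2^{2ⁿ}, 2^{2ⁿ⁺¹}) such that ∫₀^π |p(Rₙ,θ) − p̄(Rₙ)|² dθ → 0 as n → ∞, where p̄(r) = (1/π)∫₀^π p(r,θ) dθ. -/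
open MeasureTheory Real Filter Set Topology

lemma aux_cs {b : ℝ} (hb : 0 < b) {G : ℝ → ℝ}
    (hG : IntervalIntegrable (fun s => |G s|) volume 0 b)
    (hG2 : IntervalIntegrable (fun s => G s ^ 2) volume 0 b) :
    (∫ s in (0:ℝ)..b, |G s|) ^ 2 ≤ b * ∫ s in (0:ℝ)..b, G s ^ 2 := by
  set A := ∫ s in (0:ℝ)..b, |G s| with hA
  have key : (0:ℝ) ≤ ∫ s in (0:ℝ)..b, (|G s| - A / b) ^ 2 :=
    intervalIntegral.integral_nonneg hb.le (fun s _ => sq_nonneg _)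
  have expand : ∫ s in (0:ℝ)..b, (|G s| - A / b) ^ 2
      = (∫ s in (0:ℝ)..b, G s ^ 2) - 2 * (A / b) * A + (A / b) ^ 2 * b := by
    have h1 : ∀ s, (|G s| - A / b) ^ 2
        = G s ^ 2 - 2 * (A / b) * |G s| + (A / b) ^ 2 := by
      intro s; rw [sub_sq, sq_abs]; ring
    simp_rw [h1]
    rw [intervalIntegral.integral_add (hG2.sub (hG.const_mul _)) intervalIntegrable_const,
      intervalIntegral.integral_sub hG2 (hG.const_mul _),
      intervalIntegral.integral_const_mul, intervalIntegral.integral_const]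
    simp only [smul_eq_mul, sub_zero]
    ring
  rw [expand] at key
  have hb' : b ≠ 0 := hb.ne'
  have : A ^ 2 / b ≤ ∫ s in (0:ℝ)..b, G s ^ 2 := by
    have h2 : 2 * (A / b) * A - (A / b) ^ 2 * b = A ^ 2 / b := by field_simp; ring
    nlinarith [key]
  calc A ^ 2 = b * (A ^ 2 / b) := by field_simp
    _ ≤ b * ∫ s in (0:ℝ)..b, G s ^ 2 := by
        exact mul_le_mul_of_nonneg_left this hb.le

lemma aux_poincare {b : ℝ} (hb : 0 < b) {f G : ℝ → ℝ}
    (hf : ContinuousOn f (Icc 0 b)) (hG : ContinuousOn G (Icc 0 b))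
    (hd : ∀ θ ∈ Ioo 0 b, HasDerivAt f (G θ) θ) :
    ∫ θ in (0:ℝ)..b, (f θ - (1 / b) * ∫ φ in (0:ℝ)..b, f φ) ^ 2
      ≤ b ^ 2 * ∫ s in (0:ℝ)..b, G s ^ 2 := by
  have huIcc : uIcc (0:ℝ) b = Icc 0 b := uIcc_of_le hb.le
  have hGi : IntervalIntegrable G volume 0 b :=
    ContinuousOn.intervalIntegrable_of_Icc hb.le hG
  have hGai : IntervalIntegrable (fun s => |G s|) volume 0 b := hGi.abs
  have hG2i : IntervalIntegrable (fun s => G s ^ 2) volume 0 b :=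
    ContinuousOn.intervalIntegrable_of_Icc hb.le (hG.pow 2)
  have hfi : IntervalIntegrable f volume 0 b :=
    ContinuousOn.intervalIntegrable_of_Icc hb.le hf
  set A := ∫ s in (0:ℝ)..b, |G s| with hAdef
  -- FTC on subintervals
  have key : ∀ φ ∈ Icc (0:ℝ) b, ∀ θ ∈ Icc (0:ℝ) b, φ ≤ θ →
      f θ - f φ = ∫ s in φ..θ, G s := by
    intro φ hφ θ hθ hφθ
    refine (intervalIntegral.integral_eq_sub_of_hasDeriv_right_of_le hφθ
      (hf.mono (Icc_subset_Icc hφ.1 hθ.2)) (fun x hx => (hd x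
        ⟨lt_of_le_of_lt hφ.1 hx.1, lt_of_lt_of_le hx.2 hθ.2⟩).hasDerivWithinAt)
      (hGi.mono_set ?_)).symm
    rw [huIcc, uIcc_of_le hφθ]
    exact Icc_subset_Icc hφ.1 hθ.2
  have habs : ∀ φ ∈ Icc (0:ℝ) b, ∀ θ ∈ Icc (0:ℝ) b, |f θ - f φ| ≤ A := by
    have base : ∀ φ ∈ Icc (0:ℝ) b, ∀ θ ∈ Icc (0:ℝ) b, φ ≤ θ → |f θ - f φ| ≤ A := by
      intro φ hφ θ hθ hφθ
      rw [key φ hφ θ hθ hφθ]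
      calc |∫ s in φ..θ, G s| ≤ ∫ s in φ..θ, |G s| :=
            intervalIntegral.abs_integral_le_integral_abs hφθ
        _ ≤ A := intervalIntegral.integral_mono_interval hφ.1 hφθ hθ.2
            (Eventually.of_forall fun s => abs_nonneg _) hGai
    intro φ hφ θ hθ
    rcases le_total φ θ with h | h
    · exact base φ hφ θ hθ h
    · rw [abs_sub_comm]; exact base θ hθ φ hφ h
  set m := (1 / b) * ∫ φ in (0:ℝ)..b, f φ with hmdef
  have hmb : ∀ θ ∈ Icc (0:ℝ) b, |f θ - m| ≤ A := by
    intro θ hθ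
    have h1 : f θ - m = (1 / b) * ∫ φ in (0:ℝ)..b, (f θ - f φ) := by
      rw [intervalIntegral.integral_sub (intervalIntegrable_const) hfi,
        intervalIntegral.integral_const]
      field_simp
      rw [hmdef]
      field_simp
      ring
    rw [h1, abs_mul, abs_of_nonneg (by positivity : (0:ℝ) ≤ 1 / b)]
    have h2 : |∫ φ in (0:ℝ)..b, (f θ - f φ)| ≤ ∫ φ in (0:ℝ)..b, |f θ - f φ| :=
      intervalIntegral.abs_integral_le_integral_abs hb.le
    have h3 : ∫ φ in (0:ℝ)..b, |f θ - f φ| ≤ ∫ φ in (0:ℝ)..b, A := by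
      refine intervalIntegral.integral_mono_on hb.le
        ((intervalIntegrable_const.sub hfi).abs) intervalIntegrable_const ?_
      exact fun φ hφ => habs φ hφ θ hθ
    rw [intervalIntegral.integral_const, smul_eq_mul, sub_zero] at h3
    calc (1/b) * |∫ φ in (0:ℝ)..b, (f θ - f φ)| ≤ (1/b) * (b * A) := by
          apply mul_le_mul_of_nonneg_left (h2.trans h3) (by positivity)
      _ = A := by field_simp
  have hAnn : 0 ≤ A := intervalIntegral.integral_nonneg hb.le (fun s _ => abs_nonneg _)
  have step1 : ∫ θ in (0:ℝ)..b, (f θ - m) ^ 2 ≤ b * A ^ 2 := by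
    have h4 : ∫ θ in (0:ℝ)..b, (f θ - m) ^ 2 ≤ ∫ θ in (0:ℝ)..b, A ^ 2 := by
      refine intervalIntegral.integral_mono_on hb.le ?_ intervalIntegrable_const ?_
      · exact ContinuousOn.intervalIntegrable_of_Icc hb.le
          ((hf.sub continuousOn_const).pow 2)
      · intro θ hθ
        have h5 := abs_le.mp (hmb θ hθ)
        exact sq_le_sq' (by linarith [h5.1]) h5.2
    rwa [intervalIntegral.integral_const, smul_eq_mul, sub_zero] at h4
  have step2 : A ^ 2 ≤ b * ∫ s in (0:ℝ)..b, G s ^ 2 := aux_cs hb hGai hG2i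
  calc ∫ θ in (0:ℝ)..b, (f θ - m) ^ 2 ≤ b * A ^ 2 := step1
    _ ≤ b * (b * ∫ s in (0:ℝ)..b, G s ^ 2) := mul_le_mul_of_nonneg_left step2 hb.le
    _ = b ^ 2 * ∫ s in (0:ℝ)..b, G s ^ 2 := by ring

/-- Selection of radii `Rₙ ∈ (2^{2ⁿ}, 2^{2ⁿ⁺¹})` along which the angular
L² oscillation of the pressure tends to zero, under the weighted Dirichlet
bound `∫ |∇p|²/log r < ∞` (polar coordinates). -/
theorem stmt_9 (r₀ r₁ : ℝ) (hr₁ : max r₀ 1 < r₁) (p : ℝ × ℝ → ℝ)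
    (hp : ContDiffOn ℝ 1 p (Ici r₁ ×ˢ Icc 0 π))
    (hDir : IntegrableOn
      (fun q : ℝ × ℝ =>
        ((deriv (fun r => p (r, q.2)) q.1) ^ 2
          + (deriv (fun θ => p (q.1, θ)) q.2) ^ 2 / q.1 ^ 2) * q.1
          / Real.log q.1)
      (Ioi r₁ ×ˢ Ioo 0 π)) :
    ∃ R : ℕ → ℝ,
      (∀ n : ℕ, R n ∈ Ioo ((2:ℝ) ^ (2 ^ n)) ((2:ℝ) ^ (2 ^ (n + 1)))) ∧
      Tendsto (fun n : ℕ => ∫ θ in (0:ℝ)..π,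
          (p (R n, θ) - (1 / π) * ∫ φ in (0:ℝ)..π, p (R n, φ)) ^ 2)
        atTop (nhds 0) := by
  have hπ : (0:ℝ) < π := Real.pi_pos
  have hr11 : (1:ℝ) < r₁ := lt_of_le_of_lt (le_max_right r₀ 1) hr₁
  -- the dyadic sequence
  set a : ℕ → ℝ := fun n => (2:ℝ) ^ (2 ^ n) with hadef
  have ha_one : ∀ n, (1:ℝ) < a n := fun n =>
    one_lt_pow₀ one_lt_two (pow_ne_zero n two_ne_zero)
  have ha_sq : ∀ n, a (n + 1) = a n ^ 2 := by
    intro n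
    rw [hadef]
    simp only []
    rw [← pow_mul, pow_succ]
  have ha_lt : ∀ n, a n < a (n + 1) := by
    intro n
    rw [ha_sq n]
    nlinarith [ha_one n]
  have ha_mono : Monotone a := monotone_nat_of_le_succ fun n => (ha_lt n).le
  have hna : ∀ n : ℕ, (n : ℝ) < a n := by
    intro n
    have h1 : n < 2 ^ 2 ^ n :=
      lt_of_lt_of_le (Nat.lt_two_pow_self (n := n))
        (Nat.pow_le_pow_right (by norm_num) (Nat.lt_two_pow_self (n := n)).le)
    calc (n : ℝ) < ((2 ^ 2 ^ n : ℕ) : ℝ) := by exact_mod_cast h1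
      _ = a n := by push_cast; rfl
  -- basic sets
  set s : Set (ℝ × ℝ) := Ici r₁ ×ˢ Icc 0 π with hsdef
  set U : Set (ℝ × ℝ) := Ioi r₁ ×ˢ Ioo 0 π with hUdef
  have hUopen : IsOpen U := isOpen_Ioi.prod isOpen_Ioo
  have hUmeas : MeasurableSet U := hUopen.measurableSet
  have hUs : U ⊆ s := prod_mono Ioi_subset_Ici_self Ioo_subset_Icc_self
  have hsu : UniqueDiffOn ℝ s := (uniqueDiffOn_Ici r₁).prod (uniqueDiffOn_Icc hπ)
  have hnhds : ∀ q ∈ U, s ∈ 𝓝 q := fun q hq => mem_nhds_iff.mpr ⟨U, hUs, hUopen, hq⟩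
  have hq1 : ∀ q : ℝ × ℝ, q ∈ U → 1 < q.1 := fun q hq => lt_trans hr11 hq.1
  set F : ℝ × ℝ → ℝ := fun q => deriv (fun θ => p (q.1, θ)) q.2 with hFdef
  have hderiv_slice : ∀ q ∈ U, HasDerivAt (fun θ => p (q.1, θ)) (fderiv ℝ p q (0, 1)) q.2 := by
    intro q hq
    have hdiff : DifferentiableAt ℝ p q :=
      (hp.contDiffAt (hnhds q hq)).differentiableAt one_ne_zero
    have hcurve : HasDerivAt (fun θ : ℝ => ((q.1, θ) : ℝ × ℝ)) ((0 : ℝ), (1 : ℝ)) q.2 :=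
      HasDerivAt.prodMk (hasDerivAt_const _ _) (hasDerivAt_id _)
    exact hdiff.hasFDerivAt.comp_hasDerivAt q.2 hcurve
  have hF_eq : ∀ q ∈ U, F q = fderiv ℝ p q (0, 1) := fun q hq => (hderiv_slice q hq).deriv
  have hfW : ∀ q ∈ U, fderivWithin ℝ p s q = fderiv ℝ p q := fun q hq =>
    fderivWithin_of_mem_nhds (hnhds q hq)
  have hFcont : ContinuousOn F U := by
    have h1 : ContinuousOn (fun q => fderiv ℝ p q) U :=
      (hp.mono hUs).continuousOn_fderiv_of_isOpen hUopen le_rfl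
    exact (h1.clm_apply continuousOn_const).congr hF_eq
  set W : ℝ × ℝ → ℝ := fun q => F q ^ 2 / (q.1 * Real.log q.1) with hWdef
  have hWnonneg : ∀ q : ℝ × ℝ, 1 < q.1 → 0 ≤ W q := by
    intro q h
    have h0 : (0:ℝ) < q.1 := lt_trans one_pos h
    exact div_nonneg (sq_nonneg _) (mul_nonneg h0.le (Real.log_nonneg h.le))
  have hWcont : ContinuousOn W U := by
    apply (hFcont.pow 2).div
    · exact continuousOn_fst.mul (Real.continuousOn_log.comp continuousOn_fst
        (fun q hq => by
          simp only [mem_compl_iff, mem_singleton_iff]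
          exact ne_of_gt (lt_trans one_pos (hq1 q hq))))
    · intro q hq
      exact mul_ne_zero (ne_of_gt (lt_trans one_pos (hq1 q hq)))
        (ne_of_gt (Real.log_pos (hq1 q hq)))
  have hWint : IntegrableOn W U := by
    refine Integrable.mono' hDir (hWcont.aestronglyMeasurable hUmeas) ?_
    rw [ae_restrict_iff' hUmeas]
    filter_upwards with q hq
    have h1 : (1:ℝ) < q.1 := hq1 q hq
    have hlog : 0 < Real.log q.1 := Real.log_pos h1
    have h0 : (0:ℝ) < q.1 := lt_trans one_pos h1
    rw [Real.norm_eq_abs, abs_of_nonneg (hWnonneg q h1)]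
    have hkey : ((deriv (fun r => p (r, q.2)) q.1) ^ 2 + F q ^ 2 / q.1 ^ 2) * q.1
          / Real.log q.1 - W q
        = (deriv (fun r => p (r, q.2)) q.1) ^ 2 * q.1 / Real.log q.1 := by
      rw [hWdef]
      field_simp
      ring
    have hpos : 0 ≤ (deriv (fun r => p (r, q.2)) q.1) ^ 2 * q.1 / Real.log q.1 := by
      positivity
    have : F q = deriv (fun θ => p (q.1, θ)) q.2 := rfl
    rw [← this]
    linarith
  -- tail sets
  set T : ℕ → Set (ℝ × ℝ) := fun n => Ioi (max (a n) r₁) ×ˢ Ioo 0 π with hTdef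
  have hTmeas : ∀ n, MeasurableSet (T n) := fun n => measurableSet_Ioi.prod measurableSet_Ioo
  have hTU : ∀ n, T n ⊆ U := fun n =>
    prod_mono (Ioi_subset_Ioi (le_max_right _ _)) subset_rfl
  have hTanti : Antitone T := fun i j hij =>
    prod_mono (Ioi_subset_Ioi (max_le_max (ha_mono hij) le_rfl)) subset_rfl
  have hTinter : ⋂ n, T n = ∅ := by
    ext q
    simp only [mem_iInter, mem_empty_iff_false, iff_false]
    intro h
    obtain ⟨n, hn⟩ := exists_nat_gt q.1
    have h2 : max (a n) r₁ < q.1 := (h n).1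
    have h3 : (n : ℝ) < a n := hna n
    have h4 : a n ≤ max (a n) r₁ := le_max_left _ _
    linarith
  have hTtend : Tendsto (fun n => ∫ q in T n, W q) atTop (𝓝 0) := by
    have h := tendsto_setIntegral_of_antitone hTmeas hTanti ⟨0, hWint.mono_set (hTU 0)⟩
    rw [hTinter] at h
    simpa using h
  -- blocks
  set B : ℕ → Set (ℝ × ℝ) := fun n => Ioo (a n) (a (n + 1)) ×ˢ Ioo 0 π with hBdef
  set ε : ℕ → ℝ := fun n => ∫ q in B n, W q with hεdef
  have hBU : ∀ n, r₁ < a n → B n ⊆ U := fun n hn =>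
    prod_mono (fun x hx => lt_trans hn hx.1) subset_rfl
  have hεle : ∀ n, r₁ < a n → ε n ≤ ∫ q in T n, W q := by
    intro n hn
    refine setIntegral_mono_set (hWint.mono_set (hTU n)) ?_ ?_
    · rw [EventuallyLE, ae_restrict_iff' (hTmeas n)]
      filter_upwards with q hq
      exact hWnonneg q (lt_trans (ha_one n) (lt_of_le_of_lt (le_max_left _ _) hq.1))
    · refine HasSubset.Subset.eventuallyLE ?_
      intro x hx
      exact ⟨max_lt_iff.mpr ⟨hx.1.1, lt_trans hn hx.1.1⟩, hx.2⟩
  have hεnn : ∀ n, r₁ < a n → 0 ≤ ε n := fun n hn =>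
    setIntegral_nonneg (measurableSet_Ioo.prod measurableSet_Ioo)
      (fun q hq => hWnonneg q (lt_trans (ha_one n) hq.1.1))
  -- mean over angles
  set g : ℝ → ℝ := fun r => ∫ θ in Ioo (0:ℝ) π, F (r, θ) ^ 2 with hgdef
  have hlog2 : (0:ℝ) < Real.log 2 := Real.log_pos one_lt_two
  -- selection of radii
  have hex : ∀ n, ∃ r ∈ Ioo (a n) (a (n + 1)),
      (r₁ < a n → g r ≤ (ε n + 1 / ((n:ℝ) + 1)) / Real.log 2) := by
    intro n
    by_cases hn : r₁ < a n
    · by_contra hcon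
      push_neg at hcon
      set c := (ε n + 1 / ((n:ℝ) + 1)) / Real.log 2 with hcdef
      have hcon' : ∀ r ∈ Ioo (a n) (a (n + 1)), c < g r := fun r hr => (hcon r hr).2
      have h1 : IntegrableOn W (Ioo (a n) (a (n + 1)) ×ˢ Ioo 0 π)
          ((volume : Measure ℝ).prod volume) := by
        rw [← Measure.volume_eq_prod ℝ ℝ]
        exact hWint.mono_set (hBU n hn)
      have hprod : ε n = ∫ r in Ioo (a n) (a (n + 1)), ∫ θ in Ioo (0:ℝ) π, W (r, θ) := by
        calc ε n = ∫ q in B n, W q ∂((volume : Measure ℝ).prod volume) := by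
              rw [← Measure.volume_eq_prod ℝ ℝ]
          _ = _ := setIntegral_prod W h1
      have hinner : ∀ r : ℝ, (∫ θ in Ioo (0:ℝ) π, W (r, θ)) = g r / (r * Real.log r) := by
        intro r
        rw [hgdef]
        show (∫ θ in Ioo (0:ℝ) π, F (r, θ) ^ 2 / (r * Real.log r)) = _
        exact integral_div _ _
      have h1' : Integrable W (((volume : Measure ℝ).restrict (Ioo (a n) (a (n + 1)))).prod
          ((volume : Measure ℝ).restrict (Ioo 0 π))) := by
        rwa [Measure.prod_restrict]
      have houter : IntegrableOn (fun r => g r / (r * Real.log r)) (Ioo (a n) (a (n + 1))) := by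
        have h2 := h1'.integral_prod_left
        exact h2.congr (Eventually.of_forall fun r => hinner r)
      have hcontlow : ContinuousOn (fun r : ℝ => c / (r * Real.log r))
          (Icc (a n) (a (n + 1))) := by
        apply continuousOn_const.div
        · exact continuousOn_id.mul (Real.continuousOn_log.mono (fun x hx => by
            simp only [mem_compl_iff, mem_singleton_iff]
            exact ne_of_gt (lt_trans one_pos (lt_of_lt_of_le (ha_one n) hx.1))))
        · intro x hx
          have hx1 : 1 < x := lt_of_lt_of_le (ha_one n) hx.1
          exact mul_ne_zero (ne_of_gt (lt_trans one_pos hx1)) (ne_of_gt (Real.log_pos hx1))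
      have hlowint : IntegrableOn (fun r => c / (r * Real.log r)) (Ioo (a n) (a (n + 1))) :=
        (hcontlow.integrableOn_Icc).mono_set Ioo_subset_Icc_self
      have hmono : ∫ r in Ioo (a n) (a (n + 1)), c / (r * Real.log r)
          ≤ ∫ r in Ioo (a n) (a (n + 1)), g r / (r * Real.log r) := by
        refine setIntegral_mono_on hlowint houter measurableSet_Ioo ?_
        intro r hr
        have hr1 : 1 < r := lt_trans (ha_one n) hr.1
        have hD : 0 < r * Real.log r :=
          mul_pos (lt_trans one_pos hr1) (Real.log_pos hr1)
        exact (div_le_div_iff_of_pos_right hD).mpr (hcon' r hr).le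
      -- FTC computation
      have hFTC : ∫ r in Ioo (a n) (a (n + 1)), (1:ℝ) / (r * Real.log r) = Real.log 2 := by
        have hle : a n ≤ a (n + 1) := (ha_lt n).le
        have hder : ∀ x ∈ uIcc (a n) (a (n + 1)),
            HasDerivAt (fun r => Real.log (Real.log r)) (1 / (x * Real.log x)) x := by
          intro x hx
          rw [uIcc_of_le hle] at hx
          have hx1 : 1 < x := lt_of_lt_of_le (ha_one n) hx.1
          have hx0 : x ≠ 0 := ne_of_gt (lt_trans one_pos hx1)
          have hlx : Real.log x ≠ 0 := ne_of_gt (Real.log_pos hx1)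
          have h := (Real.hasDerivAt_log hlx).comp x (Real.hasDerivAt_log hx0)
          have e : 1 / (x * Real.log x) = (Real.log x)⁻¹ * x⁻¹ := by
            rw [one_div, mul_inv, mul_comm]
          rw [e]; exact h
        have hint : IntervalIntegrable (fun r => (1:ℝ) / (r * Real.log r)) volume
            (a n) (a (n + 1)) := by
          apply ContinuousOn.intervalIntegrable_of_Icc hle
          apply continuousOn_const.div
          · exact continuousOn_id.mul (Real.continuousOn_log.mono (fun x hx => by
              simp only [mem_compl_iff, mem_singleton_iff]
              exact ne_of_gt (lt_trans one_pos (lt_of_lt_of_le (ha_one n) hx.1))))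
          · intro x hx
            have hx1 : 1 < x := lt_of_lt_of_le (ha_one n) hx.1
            exact mul_ne_zero (ne_of_gt (lt_trans one_pos hx1)) (ne_of_gt (Real.log_pos hx1))
        have h3 := intervalIntegral.integral_eq_sub_of_hasDerivAt hder hint
        have h4 : Real.log (Real.log (a (n + 1))) - Real.log (Real.log (a n))
            = Real.log 2 := by
          have hL : 0 < Real.log (a n) := Real.log_pos (ha_one n)
          rw [ha_sq n, Real.log_pow]
          push_cast
          rw [Real.log_mul two_ne_zero (ne_of_gt hL)]
          ring
        rw [← integral_Ioc_eq_integral_Ioo, ← intervalIntegral.integral_of_le hle]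
        rw [h3, h4]
      have hconst : ∫ r in Ioo (a n) (a (n + 1)), c / (r * Real.log r)
          = c * Real.log 2 := by
        have heq : (fun r : ℝ => c / (r * Real.log r))
            = fun r : ℝ => c * (1 / (r * Real.log r)) := funext fun r => by ring
        rw [heq, integral_const_mul, hFTC]
      have hcε : c * Real.log 2 = ε n + 1 / ((n:ℝ) + 1) := by
        rw [hcdef, div_mul_cancel₀ _ (ne_of_gt hlog2)]
      have hpos : (0:ℝ) < 1 / ((n:ℝ) + 1) := by positivity
      have hfinal : ε n = ∫ r in Ioo (a n) (a (n + 1)), g r / (r * Real.log r) := by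
        rw [hprod]
        exact setIntegral_congr_fun measurableSet_Ioo fun r _ => hinner r
      linarith [hmono, hconst.symm.trans_le hmono]
    · exact ⟨(a n + a (n + 1)) / 2,
        ⟨by linarith [ha_lt n], by linarith [ha_lt n]⟩, fun h => absurd h hn⟩
  choose R hRmem hRbound using hex
  refine ⟨R, hRmem, ?_⟩
  -- the tendsto part
  have haTop : Tendsto a atTop atTop :=
    tendsto_atTop_mono (fun n => (hna n).le) tendsto_natCast_atTop_atTop
  have hev : ∀ᶠ n in atTop, r₁ < a n := haTop.eventually_gt_atTop r₁
  set c' : ℕ → ℝ := fun n => π ^ 2 * ((ε n + 1 / ((n:ℝ) + 1)) / Real.log 2) with hc'def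
  have hεtend : Tendsto ε atTop (𝓝 0) := by
    refine tendsto_of_tendsto_of_tendsto_of_le_of_le' tendsto_const_nhds hTtend ?_ ?_
    · filter_upwards [hev] with n hn using hεnn n hn
    · filter_upwards [hev] with n hn using hεle n hn
  have hc'tend : Tendsto c' atTop (𝓝 0) := by
    have h1 : Tendsto (fun n : ℕ => (ε n + 1 / ((n:ℝ) + 1)) / Real.log 2) atTop
        (𝓝 ((0 + 0) / Real.log 2)) :=
      (hεtend.add tendsto_one_div_add_atTop_nhds_zero_nat).div_const _
    have h2 := h1.const_mul (π ^ 2)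
    have h0 : π ^ 2 * (((0:ℝ) + 0) / Real.log 2) = 0 := by norm_num
    rw [h0] at h2
    exact h2
  refine tendsto_of_tendsto_of_tendsto_of_le_of_le' tendsto_const_nhds hc'tend ?_ ?_
  · exact Eventually.of_forall fun n =>
      intervalIntegral.integral_nonneg hπ.le fun θ _ => sq_nonneg _
  · filter_upwards [hev] with n hn
    set r := R n with hrdef
    have hrI : r ∈ Ioo (a n) (a (n + 1)) := hRmem n
    have hrr₁ : r₁ < r := lt_trans hn hrI.1
    set Gn : ℝ → ℝ := fun θ => (fderivWithin ℝ p s (r, θ)) (0, 1) with hGndef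
    have hmaps : MapsTo (fun θ : ℝ => ((r, θ) : ℝ × ℝ)) (Icc 0 π) s := fun θ hθ =>
      ⟨le_of_lt hrr₁, hθ⟩
    have hfcont : ContinuousOn (fun θ => p (r, θ)) (Icc 0 π) :=
      hp.continuousOn.comp (Continuous.continuousOn (by fun_prop)) hmaps
    have hGncont : ContinuousOn Gn (Icc 0 π) := by
      have h1 : ContinuousOn (fun q : ℝ × ℝ => (fderivWithin ℝ p s q) ((0:ℝ), (1:ℝ))) s :=
        (hp.continuousOn_fderivWithin hsu le_rfl).clm_apply continuousOn_const
      exact h1.comp (Continuous.continuousOn (by fun_prop)) hmaps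
    have hder : ∀ θ ∈ Ioo 0 π, HasDerivAt (fun θ => p (r, θ)) (Gn θ) θ := by
      intro θ hθ
      have hqU : ((r, θ) : ℝ × ℝ) ∈ U := ⟨hrr₁, hθ⟩
      have h := hderiv_slice (r, θ) hqU
      rw [hGndef]
      simpa [hfW _ hqU] using h
    have hP := aux_poincare hπ hfcont hGncont hder
    have hGg : ∫ s' in (0:ℝ)..π, Gn s' ^ 2 = g r := by
      rw [intervalIntegral.integral_of_le hπ.le, integral_Ioc_eq_integral_Ioo, hgdef]
      refine setIntegral_congr_fun measurableSet_Ioo fun θ hθ => ?_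
      have hqU : ((r, θ) : ℝ × ℝ) ∈ U := ⟨hrr₁, hθ⟩
      show (fderivWithin ℝ p s (r, θ)) ((0:ℝ), (1:ℝ)) ^ 2 = F (r, θ) ^ 2
      rw [hfW _ hqU, hF_eq _ hqU]
    have hgc : g r ≤ (ε n + 1 / ((n:ℝ) + 1)) / Real.log 2 := hRbound n hn
    calc ∫ θ in (0:ℝ)..π, (p (r, θ) - (1 / π) * ∫ φ in (0:ℝ)..π, p (r, φ)) ^ 2
        ≤ π ^ 2 * ∫ s' in (0:ℝ)..π, Gn s' ^ 2 := hP
      _ = π ^ 2 * g r := by rw [hGg]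
      _ ≤ c' n := by
          rw [hc'def]
          exact mul_le_mul_of_nonneg_left hgc (by positivity)
end
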